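/- Let n be an integer with 9 ≤ n ≤ 11. For every b with 0 < b ≤ 1/(2n+2), the function ρ is differentiable at b and its derivative satisfies ρ'(b) > 4/9. -/

import Mathlib

set_option maxHeartbeats 2000000

/-- The quantity `a(b) = b(2+(n-2)b)² / (2(2+(n-3)b))`. -/
noncomputable def aFun (n : ℕ) (b : ℝ) : ℝ :=
  b * (2 + ((n : ℝ) - 2) * b) ^ 2 / (2 * (2 + ((n : ℝ) - 3) * b))

/-- The quantity `γ(b) = b / (2+(n-3)b)`. -/
noncomputable def gammaFun (n : ℕ) (b : ℝ) : ℝ :=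
  b / (2 + ((n : ℝ) - 3) * b)

/-- The quantity
`ρ(b) = b - 2(n-1)γ(b)(1-2b)/n² - 2(n-1)(1+γ(b))(n²b²-2(n-1)(a(b)-b)(1-2b))/(n²(1+2(n-1)a(b)))`. -/
noncomputable def rhoFun (n : ℕ) (b : ℝ) : ℝ :=
  b - 2 * ((n : ℝ) - 1) * gammaFun n b * (1 - 2 * b) / (n : ℝ) ^ 2 -
    2 * ((n : ℝ) - 1) * (1 + gammaFun n b) *
      ((n : ℝ) ^ 2 * b ^ 2 - 2 * ((n : ℝ) - 1) * (aFun n b - b) * (1 - 2 * b)) /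
      ((n : ℝ) ^ 2 * (1 + 2 * ((n : ℝ) - 1) * aFun n b))

/-- Numerator polynomial of `ρ` as a rational function. -/
noncomputable def pFun (n : ℕ) (x : ℝ) : ℝ :=
  0 + (4*(n:ℝ)^2-4*(n:ℝ)+4)*x + (12*(n:ℝ)^3-46*(n:ℝ)^2+56*(n:ℝ)-30)*x^2
    + (13*(n:ℝ)^4-86*(n:ℝ)^3+205*(n:ℝ)^2-212*(n:ℝ)+84)*x^3
    + (6*(n:ℝ)^5-56*(n:ℝ)^4+204*(n:ℝ)^3-362*(n:ℝ)^2+312*(n:ℝ)-104)*x^4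
    + ((n:ℝ)^6-12*(n:ℝ)^5+59*(n:ℝ)^4-152*(n:ℝ)^3+216*(n:ℝ)^2-160*(n:ℝ)+48)*x^5

/-- Denominator polynomial of `ρ` as a rational function. -/
noncomputable def qFun (n : ℕ) (x : ℝ) : ℝ :=
  4*(n:ℝ)^2 + (12*(n:ℝ)^3-20*(n:ℝ)^2)*x + (13*(n:ℝ)^4-46*(n:ℝ)^3+37*(n:ℝ)^2)*x^2
    + (6*(n:ℝ)^5-34*(n:ℝ)^4+60*(n:ℝ)^3-32*(n:ℝ)^2)*x^3
    + ((n:ℝ)^6-8*(n:ℝ)^5+23*(n:ℝ)^4-28*(n:ℝ)^3+12*(n:ℝ)^2)*x^4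

lemma polyHD (c0 c1 c2 c3 c4 c5 x : ℝ) :
    HasDerivAt (fun y : ℝ => c0 + c1*y + c2*y^2 + c3*y^3 + c4*y^4 + c5*y^5)
      (c1 + 2*c2*x + 3*c3*x^2 + 4*c4*x^3 + 5*c5*x^4) x := by
  have h := ((((((hasDerivAt_const x c0).add ((hasDerivAt_pow 1 x).const_mul c1)).add
    ((hasDerivAt_pow 2 x).const_mul c2)).add ((hasDerivAt_pow 3 x).const_mul c3)).add
    ((hasDerivAt_pow 4 x).const_mul c4)).add ((hasDerivAt_pow 5 x).const_mul c5))
  simp only [pow_one] at h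
  refine h.congr_deriv ?_
  push_cast; ring

lemma polyHD4 (c0 c1 c2 c3 c4 x : ℝ) :
    HasDerivAt (fun y : ℝ => c0 + c1*y + c2*y^2 + c3*y^3 + c4*y^4)
      (c1 + 2*c2*x + 3*c3*x^2 + 4*c4*x^3) x := by
  have h := (((((hasDerivAt_const x c0).add ((hasDerivAt_pow 1 x).const_mul c1)).add
    ((hasDerivAt_pow 2 x).const_mul c2)).add ((hasDerivAt_pow 3 x).const_mul c3)).add
    ((hasDerivAt_pow 4 x).const_mul c4))
  simp only [pow_one] at h
  refine h.congr_deriv ?_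
  push_cast; ring

lemma qFun_eq (n : ℕ) (x : ℝ) : qFun n x = (n:ℝ)^2 * (2 + ((n:ℝ) - 3) * x) *
    ((2 + ((n:ℝ) - 3) * x) + ((n:ℝ) - 1) * x * (2 + ((n:ℝ) - 2) * x) ^ 2) := by
  unfold qFun; ring

lemma key (n : ℕ) (hn : (1:ℝ) ≤ (n:ℝ)) (x : ℝ)
    (hD : 0 < 2 + ((n:ℝ) - 3) * x)
    (hQ2 : 0 < (2 + ((n:ℝ) - 3) * x) + ((n:ℝ) - 1) * x * (2 + ((n:ℝ) - 2) * x) ^ 2) :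
    rhoFun n x = pFun n x / qFun n x := by
  have hn0 : (n:ℝ) ≠ 0 := by linarith
  have hnpos : (0:ℝ) < (n:ℝ) := by linarith
  have hD' : (2 + ((n:ℝ) - 3) * x) ≠ 0 := ne_of_gt hD
  have hE : 1 + 2 * ((n:ℝ) - 1) * aFun n x =
      ((2 + ((n:ℝ) - 3) * x) + ((n:ℝ) - 1) * x * (2 + ((n:ℝ) - 2) * x) ^ 2) /
        (2 + ((n:ℝ) - 3) * x) := by
    unfold aFun; generalize hd : 2 + ((n:ℝ) - 3) * x = D at hD' ⊢; field_simp
  have hEpos : 0 < 1 + 2 * ((n:ℝ) - 1) * aFun n x := by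
    rw [hE]; exact div_pos hQ2 hD
  have hE' := ne_of_gt hEpos
  have hQ2' := ne_of_gt hQ2
  have hQpos : 0 < qFun n x := by
    rw [qFun_eq]; exact mul_pos (mul_pos (pow_pos hnpos 2) hD) hQ2
  have hQne := ne_of_gt hQpos
  unfold rhoFun gammaFun
  rw [hE]
  unfold aFun
  rw [hE] at hE'
  unfold pFun qFun
  unfold qFun at hQne
  rw [eq_div_iff hQne]
  generalize hd : 2 + ((n:ℝ) - 3) * x = D at hD' hQ2' ⊢
  generalize hq : D + ((n:ℝ) - 1) * x * (2 + ((n:ℝ) - 2) * x) ^ 2 = E at hQ2' ⊢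
  field_simp
  subst hq
  subst hd
  ring

/-- for `9 ≤ n ≤ 11` and `0 < b ≤ 1/(2n+2)`, the function `ρ` is
differentiable at `b` and `ρ'(b) > 4/9`. -/
theorem stmt_2 (n : ℕ) (hn9 : 9 ≤ n) (hn11 : n ≤ 11) (b : ℝ)
    (hb : b ∈ Set.Ioc (0 : ℝ) (1 / (2 * (n : ℝ) + 2))) :
    DifferentiableAt ℝ (rhoFun n) b ∧ 4 / 9 < deriv (rhoFun n) b := by
  obtain ⟨hb0, hb1⟩ := hb
  have hn : (9:ℝ) ≤ (n:ℝ) := by exact_mod_cast hn9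
  have hn1 : (1:ℝ) ≤ (n:ℝ) := by linarith
  have hnpos : (0:ℝ) < (n:ℝ) := by linarith
  -- positivity of the denominators at b
  have hDb : 0 < 2 + ((n:ℝ) - 3) * b := by nlinarith
  have hQ2b : 0 < (2 + ((n:ℝ) - 3) * b) + ((n:ℝ) - 1) * b * (2 + ((n:ℝ) - 2) * b) ^ 2 := by
    have h1 : 0 ≤ ((n:ℝ) - 1) * b * (2 + ((n:ℝ) - 2) * b) ^ 2 :=
      mul_nonneg (mul_nonneg (by linarith) hb0.le) (sq_nonneg _)
    linarith
  -- eventual equality with the rational function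
  have hc1 : ContinuousAt (fun x : ℝ => 2 + ((n:ℝ) - 3) * x) b := by fun_prop
  have hc2 : ContinuousAt
      (fun x : ℝ => (2 + ((n:ℝ) - 3) * x) + ((n:ℝ) - 1) * x * (2 + ((n:ℝ) - 2) * x) ^ 2) b := by
    fun_prop
  have h1 : ∀ᶠ x in nhds b, 0 < 2 + ((n:ℝ) - 3) * x := hc1.eventually (eventually_gt_nhds hDb)
  have h2 : ∀ᶠ x in nhds b,
      0 < (2 + ((n:ℝ) - 3) * x) + ((n:ℝ) - 1) * x * (2 + ((n:ℝ) - 2) * x) ^ 2 :=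
    hc2.eventually (eventually_gt_nhds hQ2b)
  have heq : rhoFun n =ᶠ[nhds b] fun x => pFun n x / qFun n x := by
    filter_upwards [h1, h2] with x hx1 hx2
    exact key n hn1 x hx1 hx2
  -- the derivative of the rational function
  have hQbpos : 0 < qFun n b := by
    rw [qFun_eq]; exact mul_pos (mul_pos (pow_pos hnpos 2) hDb) hQ2b
  have hP : HasDerivAt (pFun n)
      ((4*(n:ℝ)^2-4*(n:ℝ)+4) + 2*(12*(n:ℝ)^3-46*(n:ℝ)^2+56*(n:ℝ)-30)*b
        + 3*(13*(n:ℝ)^4-86*(n:ℝ)^3+205*(n:ℝ)^2-212*(n:ℝ)+84)*b^2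
        + 4*(6*(n:ℝ)^5-56*(n:ℝ)^4+204*(n:ℝ)^3-362*(n:ℝ)^2+312*(n:ℝ)-104)*b^3
        + 5*((n:ℝ)^6-12*(n:ℝ)^5+59*(n:ℝ)^4-152*(n:ℝ)^3+216*(n:ℝ)^2-160*(n:ℝ)+48)*b^4) b :=
    polyHD 0 _ _ _ _ _ b
  have hQ : HasDerivAt (qFun n)
      ((12*(n:ℝ)^3-20*(n:ℝ)^2) + 2*(13*(n:ℝ)^4-46*(n:ℝ)^3+37*(n:ℝ)^2)*b
        + 3*(6*(n:ℝ)^5-34*(n:ℝ)^4+60*(n:ℝ)^3-32*(n:ℝ)^2)*b^2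
        + 4*((n:ℝ)^6-8*(n:ℝ)^5+23*(n:ℝ)^4-28*(n:ℝ)^3+12*(n:ℝ)^2)*b^3) b :=
    polyHD4 _ _ _ _ _ b
  have hF := hP.div hQ (ne_of_gt hQbpos)
  constructor
  · rw [Filter.EventuallyEq.differentiableAt_iff heq]
    exact hF.differentiableAt
  · rw [heq.deriv_eq, show (fun x => pFun n x / qFun n x) = pFun n / qFun n from rfl, hF.deriv]
    rw [lt_div_iff₀ (by positivity)]
    simp only [pFun, qFun]
    interval_cases n <;> push_cast <;>
      nlinarith [hb0, pow_pos hb0 2, pow_pos hb0 3, pow_pos hb0 4, pow_pos hb0 5,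
        pow_pos hb0 6, pow_pos hb0 7, pow_pos hb0 8, mul_pos hb0 hb0]
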